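/- Let q be odd and σ : F_q → F_q a permutation. Define ‖Γ_σ‖ = Σ over all maximal collinear subsets L of Γ_σ of (|L|-1)(|L|-2)/2. Then ‖Γ_σ‖ ≥ (5q-1)/14. In particular, the number of collinear triples in Γ_σ is at least (5q-1)/14. -/

import Mathlib

open Finset

/-- Number of `i` with `σ i = m * i + b`, i.e. the number of points of the graph of
`σ` on the line `y = m x + b`. -/
def lineSize {F : Type*} [Field F] [Fintype F] [DecidableEq F]
    (σ : F → F) (m b : F) : ℕ :=
  (Finset.univ.filter (fun i : F => σ i = m * i + b)).card

/-- A finite set `s` of abscissae gives collinear points `(i, σ i)` of the graph. -/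
def Collin {F : Type*} [Field F] (σ : F → F) (s : Finset F) : Prop :=
  ∀ i ∈ s, ∀ k ∈ s, ∀ l ∈ s, (σ k - σ i) * (l - i) = (σ l - σ i) * (k - i)

instance {F : Type*} [Field F] [DecidableEq F] (σ : F → F) (s : Finset F) :
    Decidable (Collin σ s) := by unfold Collin; infer_instance

namespace CollinAux

/-! ### Numeric helper lemmas -/

lemma two_mul_choose_two (n : ℕ) : 2 * Nat.choose n 2 = n * (n - 1) := by
  induction n with
  | zero => rfl
  | succ n ih =>
    rw [Nat.choose_succ_succ n 1, Nat.choose_one_right]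
    cases n with
    | zero => rfl
    | succ m =>
      have e : m + 1 + 1 - 1 = m + 1 := rfl
      have e2 : m + 1 - 1 = m := rfl
      rw [e]
      rw [e2] at ih
      calc 2 * (m + 1 + Nat.choose (m + 1) 2)
          = 2 * (m + 1) + 2 * Nat.choose (m + 1) 2 := by ring
        _ = 2 * (m + 1) + (m + 1) * m := by rw [ih]
        _ = (m + 1 + 1) * (m + 1) := by ring

lemma choose_ineq (k : ℕ) :
    k * k - k + (if k = 1 then 1 else 0) ≤ 3 * Nat.choose (k - 1) 2 + k := by
  match k with
  | 0 => simp
  | 1 => simp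
  | 2 => simp [Nat.choose]
  | (n+3) =>
    have h : 2 * Nat.choose (n + 2) 2 = (n + 2) * (n + 1) := by
      have e : n + 2 - 1 = n + 1 := rfl
      rw [two_mul_choose_two, e]
    rw [if_neg (by omega), add_zero]
    have e1 : n + 3 - 1 = n + 2 := rfl
    rw [e1]
    have hsub : (n+3) * (n+3) - (n+3) = (n+3) * (n+2) := by
      have h2 : (n+3) * (n+3) = (n+3) * (n+2) + (n+3) := by ring
      rw [h2, Nat.add_sub_cancel]
    rw [hsub]
    nlinarith [h, sq_nonneg n]

lemma choose23 (k : ℕ) : Nat.choose (k - 1) 2 ≤ Nat.choose k 3 := by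
  cases k with
  | zero => simp
  | succ n =>
    have e : n + 1 - 1 = n := rfl
    rw [e, Nat.choose_succ_succ n 2]
    exact Nat.le_add_right _ _

lemma sq_sub_helper (q : ℕ) (h : 1 ≤ q) : (q - 1) * q = q * q - q := by
  obtain ⟨n, rfl⟩ := Nat.exists_eq_add_of_le h
  have e : 1 + n - 1 = n := by omega
  rw [e]
  have h2 : (1 + n) * (1 + n) = n * (1 + n) + (1 + n) := by ring
  rw [h2, Nat.add_sub_cancel]

/-! ### Basic definitions -/

variable {F : Type*} [Field F] [Fintype F] [DecidableEq F]

/-- fiber of the line `y = m x + b` : abscissae of graph points on the line. -/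
def fib (σ : F → F) (m b : F) : Finset F := univ.filter (fun i => σ i = m * i + b)

def tau (σ : F → F) (m i : F) : F := σ i - m * i

/-- number of points `x ≠ p` such that the segment `p x` has slope `s`. -/
def dd (σ : F → F) (p s : F) : ℕ :=
  (univ.filter (fun x => x ≠ p ∧ σ x - σ p = s * (x - p))).card

/-- number of nonzero directions missing at `p`. -/
def mu (σ : F → F) (p : F) : ℕ :=
  ((univ.erase (0:F)).filter (fun s => dd σ p s = 0)).card

def Cs (σ : F → F) (m : F) : ℕ := ∑ b : F, Nat.choose ((fib σ m b).card - 1) 2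

def XX (σ : F → F) : ℕ := ∑ m ∈ (univ.erase (0:F)), Cs σ m

def P2 (σ : F → F) (m : F) : ℕ :=
  (univ.offDiag.filter (fun pr : F × F => tau σ m pr.1 = tau σ m pr.2)).card

def usl (σ : F → F) (m : F) : ℕ := (univ.filter (fun p : F => dd σ p m = 0)).card

def Wsum (σ : F → F) : ℕ :=
  ∑ m ∈ (univ.erase (0:F)),
    (univ.filter (fun p : F => dd σ p m = 0 ∧ 2 ≤ mu σ p)).card

lemma mem_fib {σ : F → F} {m b i : F} : i ∈ fib σ m b ↔ tau σ m i = b := by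
  simp [fib, tau, sub_eq_iff_eq_add']

lemma fib_eq_filter (σ : F → F) (m b : F) :
    fib σ m b = univ.filter (fun i => tau σ m i = b) := by
  ext i; simp [mem_fib, -mem_univ]
  simp [tau, sub_eq_iff_eq_add', fib]

lemma sum_fib_card (σ : F → F) (m : F) :
    ∑ b : F, (fib σ m b).card = Fintype.card F := by
  rw [← card_univ,
    Finset.card_eq_sum_card_fiberwise (f := tau σ m) (t := univ) (fun x _ => mem_univ _)]
  exact Finset.sum_congr rfl fun b _ => by rw [fib_eq_filter]

lemma tau_eq_iff (σ : F → F) (m x p : F) :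
    tau σ m x = tau σ m p ↔ σ x - σ p = m * (x - p) := by
  unfold tau; constructor <;> intro h <;> linear_combination h

lemma fib_card_point (σ : F → F) (m p : F) :
    (fib σ m (tau σ m p)).card = 1 + dd σ p m := by
  have hset : fib σ m (tau σ m p)
      = insert p (univ.filter (fun x => x ≠ p ∧ σ x - σ p = m * (x - p))) := by
    ext x
    simp only [mem_fib, mem_insert, mem_filter, mem_univ, true_and]
    rw [tau_eq_iff]
    constructor
    · intro h
      by_cases hx : x = p
      · exact Or.inl hx
      · exact Or.inr ⟨hx, h⟩
    · rintro (rfl | ⟨_, h⟩)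
      · ring
      · exact h
  rw [hset, card_insert_of_notMem (by simp), add_comm]
  rfl

/-- The fibers of the slope map from `p`. -/
lemma fiber_slope (σ : F → F) (p s : F) :
    (univ.erase p).filter (fun x => (σ x - σ p) / (x - p) = s)
      = univ.filter (fun x => x ≠ p ∧ σ x - σ p = s * (x - p)) := by
  ext x
  simp only [mem_filter, mem_erase, mem_univ, and_true, true_and]
  constructor
  · rintro ⟨hx, h⟩
    exact ⟨hx, by rw [← h, div_mul_cancel₀ _ (sub_ne_zero.2 hx)]⟩
  · rintro ⟨hx, h⟩
    exact ⟨hx, by rw [h, mul_div_cancel_right₀ _ (sub_ne_zero.2 hx)]⟩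

lemma slope_maps_to {σ : F → F} (hσ : Function.Injective σ) (p : F) :
    ∀ x ∈ (univ : Finset F).erase p,
      (σ x - σ p) / (x - p) ∈ (univ : Finset F).erase 0 := by
  intro x hx
  rw [mem_erase] at hx ⊢
  exact ⟨div_ne_zero (sub_ne_zero.2 fun h => hx.1 (hσ h)) (sub_ne_zero.2 hx.1),
    mem_univ _⟩

lemma sum_dd (σ : F → F) (hσ : Function.Injective σ) (p : F) :
    ∑ s ∈ univ.erase (0:F), dd σ p s = Fintype.card F - 1 := by
  have hcard : ((univ : Finset F).erase p).card = Fintype.card F - 1 := by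
    rw [card_erase_of_mem (mem_univ p), card_univ]
  rw [← hcard,
    Finset.card_eq_sum_card_fiberwise (f := fun x => (σ x - σ p) / (x - p))
      (t := univ.erase (0:F)) (slope_maps_to hσ p)]
  exact Finset.sum_congr rfl fun s _ => by rw [fiber_slope σ p s]; rfl

lemma P2_eq (σ : F → F) (m : F) :
    P2 σ m = ∑ b : F, ((fib σ m b).card * (fib σ m b).card - (fib σ m b).card) := by
  rw [P2, Finset.card_eq_sum_card_fiberwise
    (f := fun pr : F × F => tau σ m pr.1) (t := univ) (fun x _ => mem_univ _)]
  refine Finset.sum_congr rfl fun b _ => ?_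
  rw [← Finset.offDiag_card]
  congr 1
  ext ⟨x, y⟩
  simp only [mem_filter, mem_offDiag, mem_univ, true_and, mem_fib]
  constructor
  · rintro ⟨⟨hxy, he⟩, hb⟩
    exact ⟨hb, by rw [← he, hb], hxy⟩
  · rintro ⟨hx, hy, hxy⟩
    exact ⟨⟨hxy, by rw [hx, hy]⟩, hx⟩

lemma sum_P2 (σ : F → F) (hσ : Function.Injective σ) :
    ∑ m ∈ univ.erase (0:F), P2 σ m
      = Fintype.card F * Fintype.card F - Fintype.card F := by
  have hcard : (univ : Finset F).offDiag.card
      = Fintype.card F * Fintype.card F - Fintype.card F := by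
    rw [Finset.offDiag_card, card_univ]
  rw [← hcard,
    Finset.card_eq_sum_card_fiberwise
      (f := fun pr : F × F => (σ pr.1 - σ pr.2) / (pr.1 - pr.2))
      (t := univ.erase (0:F))
      (fun pr hpr => by
        rw [mem_coe, mem_offDiag] at hpr
        rw [mem_coe, mem_erase]
        exact ⟨div_ne_zero (sub_ne_zero.2 fun h => hpr.2.2 (hσ h))
          (sub_ne_zero.2 hpr.2.2), mem_univ _⟩)]
  refine Finset.sum_congr rfl fun s hs => ?_
  rw [mem_erase] at hs
  rw [P2]
  congr 1
  ext ⟨x, y⟩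
  simp only [mem_filter, mem_offDiag, mem_univ, true_and]
  constructor
  · rintro ⟨hxy, h⟩
    rw [tau_eq_iff] at h
    refine ⟨hxy, ?_⟩
    rw [div_eq_iff (sub_ne_zero.2 hxy)]
    linear_combination h
  · rintro ⟨hxy, h⟩
    rw [div_eq_iff (sub_ne_zero.2 hxy)] at h
    refine ⟨hxy, ?_⟩
    rw [tau_eq_iff]
    linear_combination h

lemma usl_eq (σ : F → F) (m : F) :
    usl σ m = ∑ b : F, (if (fib σ m b).card = 1 then 1 else 0) := by
  rw [usl, Finset.card_eq_sum_card_fiberwise (f := tau σ m)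
    (t := (univ : Finset F)) (fun x _ => mem_univ _)]
  refine Finset.sum_congr rfl fun b _ => ?_
  by_cases h1 : (fib σ m b).card = 1
  · rw [if_pos h1]
    have hset : (univ.filter (fun p : F => dd σ p m = 0)).filter
        (fun p => tau σ m p = b) = fib σ m b := by
      ext p
      simp only [mem_filter, mem_univ, true_and, mem_fib]
      constructor
      · rintro ⟨_, hb⟩; exact hb
      · intro hb
        refine ⟨?_, hb⟩
        have hcp := fib_card_point σ m p
        rw [hb, h1] at hcp
        omega
    rw [hset, h1]
  · rw [if_neg h1]
    rw [Finset.card_eq_zero]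
    ext p
    simp only [mem_filter, mem_univ, true_and, Finset.notMem_empty, iff_false, not_and]
    intro hdd hb
    apply h1
    have hcp := fib_card_point σ m p
    rw [hb, hdd] at hcp
    omega

lemma F1_slope (σ : F → F) (m : F) :
    P2 σ m + usl σ m ≤ 3 * Cs σ m + Fintype.card F := by
  rw [P2_eq, usl_eq]
  simp only [Cs]
  rw [← sum_fib_card σ m, Finset.mul_sum, ← Finset.sum_add_distrib,
    ← Finset.sum_add_distrib]
  exact Finset.sum_le_sum fun b _ => choose_ineq _

lemma sum_usl_le (σ : F → F) (hσ : Function.Injective σ) :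
    ∑ m ∈ univ.erase (0:F), usl σ m ≤ 3 * XX σ := by
  have h1 : ∑ m ∈ univ.erase (0:F), (P2 σ m + usl σ m)
      ≤ ∑ m ∈ univ.erase (0:F), (3 * Cs σ m + Fintype.card F) :=
    Finset.sum_le_sum fun m _ => F1_slope σ m
  rw [Finset.sum_add_distrib, Finset.sum_add_distrib, sum_P2 σ hσ, Finset.sum_const,
    smul_eq_mul, card_erase_of_mem (mem_univ 0), card_univ, ← Finset.mul_sum] at h1
  have hq1 : 1 ≤ Fintype.card F := Fintype.card_pos
  rw [sq_sub_helper _ hq1] at h1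
  rw [show 3 * ∑ m ∈ univ.erase (0:F), Cs σ m = 3 * XX σ from rfl] at h1
  rw [add_comm (3 * XX σ) _] at h1
  exact (add_le_add_iff_left _).1 h1

lemma sum_usl_eq_sum_mu (σ : F → F) :
    ∑ m ∈ univ.erase (0:F), usl σ m = ∑ p : F, mu σ p := by
  simp only [usl, mu, Finset.card_filter]
  exact Finset.sum_comm

/-! ### Product arguments -/

lemma prod_univ_erase_zero : ∏ x ∈ (univ : Finset F).erase 0, x = -1 := by
  have h := FiniteField.prod_univ_units_id_eq_neg_one (K := F)
  have h2 : ∏ u : Fˣ, (u : F) = -1 := by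
    have h3 := congrArg (Units.val) h
    simpa using h3
  rw [← h2]
  refine Finset.prod_bij'
    (fun (x : F) (hx : x ∈ (univ : Finset F).erase 0) => Units.mk0 x (mem_erase.1 hx).1)
    (fun (u : Fˣ) _ => (u : F)) (fun x hx => mem_univ _)
    (fun u _ => mem_erase.2 ⟨u.ne_zero, mem_univ _⟩) ?_ ?_ ?_
  · intro x hx; rfl
  · intro u _; exact Units.ext rfl
  · intro x hx; rfl

lemma prod_sub_erase (c : F) : ∏ y ∈ (univ : Finset F).erase c, (y - c) = -1 := by
  rw [← prod_univ_erase_zero (F := F)]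
  refine Finset.prod_bij'
    (fun (y : F) (_ : y ∈ (univ : Finset F).erase c) => y - c)
    (fun (z : F) (_ : z ∈ (univ : Finset F).erase 0) => z + c)
    ?_ ?_ ?_ ?_ ?_
  · intro y hy; exact mem_erase.2 ⟨sub_ne_zero.2 (mem_erase.1 hy).1, mem_univ _⟩
  · intro z hz
    refine mem_erase.2 ⟨?_, mem_univ _⟩
    intro hzc
    exact (mem_erase.1 hz).1 (by linear_combination hzc)
  · intro y _; ring
  · intro z _; ring
  · intro y _; rfl

lemma prod_sigma_erase {σ : F → F} (hσ : Function.Bijective σ) (p : F) :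
    ∏ x ∈ (univ : Finset F).erase p, (σ x - σ p) = -1 := by
  classical
  rw [← prod_sub_erase (σ p)]
  refine Finset.prod_bij'
    (fun (x : F) (_ : x ∈ (univ : Finset F).erase p) => σ x)
    (fun (y : F) (_ : y ∈ (univ : Finset F).erase (σ p)) => Function.invFun σ y)
    ?_ ?_ ?_ ?_ ?_
  · intro x hx
    exact mem_erase.2 ⟨fun h => (mem_erase.1 hx).1 (hσ.injective h), mem_univ _⟩
  · intro y hy
    refine mem_erase.2 ⟨?_, mem_univ _⟩
    intro hyp
    apply (mem_erase.1 hy).1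
    have h2 := Function.rightInverse_invFun hσ.surjective y
    rw [← h2]
    exact congrArg σ hyp
  · intro x _; exact Function.leftInverse_invFun hσ.injective x
  · intro y _; exact Function.rightInverse_invFun hσ.surjective y
  · intro x _; rfl

lemma prod_slopes {σ : F → F} (hσ : Function.Bijective σ) (p : F) :
    ∏ x ∈ (univ : Finset F).erase p, ((σ x - σ p) / (x - p)) = 1 := by
  rw [Finset.prod_div_distrib, prod_sigma_erase hσ p, prod_sub_erase p]
  norm_num

lemma prod_pow_dd {σ : F → F} (hσ : Function.Bijective σ) (p : F) :
    ∏ s ∈ (univ : Finset F).erase 0, s ^ dd σ p s = 1 := by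
  have hfw := Finset.prod_fiberwise_of_maps_to (slope_maps_to hσ.injective p)
    (fun x => (σ x - σ p) / (x - p))
  rw [prod_slopes hσ p] at hfw
  rw [← hfw]
  refine Finset.prod_congr rfl fun s _ => ?_
  calc s ^ dd σ p s
      = s ^ ((univ.erase p).filter (fun x => (σ x - σ p) / (x - p) = s)).card := by
        rw [fiber_slope σ p s]; rfl
    _ = ∏ _x ∈ (univ.erase p).filter (fun x => (σ x - σ p) / (x - p) = s), s :=
        (Finset.prod_const s).symm
    _ = ∏ x ∈ (univ.erase p).filter (fun x => (σ x - σ p) / (x - p) = s),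
          ((σ x - σ p) / (x - p)) :=
        Finset.prod_congr rfl fun x hx => ((mem_filter.1 hx).2).symm

lemma neg_one_ne_one (hq : Odd (Fintype.card F)) : (-1 : F) ≠ 1 := by
  intro h
  have h2 : (2 : F) = 0 := by linear_combination -h
  have hd : ringChar F ∣ 2 := by
    have := (CharP.cast_eq_zero_iff F (ringChar F) 2).1 (by exact_mod_cast h2)
    exact this
  rcases (Nat.dvd_prime Nat.prime_two).1 hd with h1 | h1
  · exact CharP.ringChar_ne_one h1
  · have := FiniteField.even_card_iff_char_two.1 h1
    have := Nat.odd_iff.1 hq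
    omega

lemma mu_pos (hq : Odd (Fintype.card F)) {σ : F → F} (hσ : Function.Bijective σ)
    (p : F) : 1 ≤ mu σ p := by
  by_contra hcon
  push_neg at hcon
  have h0 : ∀ s ∈ (univ : Finset F).erase 0, dd σ p s ≠ 0 := by
    intro s hs hds
    have hmem : s ∈ ((univ : Finset F).erase 0).filter (fun s => dd σ p s = 0) :=
      mem_filter.2 ⟨hs, hds⟩
    have : 0 < mu σ p := card_pos.2 ⟨s, hmem⟩
    omega
  have hall : ∀ s ∈ (univ : Finset F).erase 0, dd σ p s = 1 := by
    by_contra hc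
    push_neg at hc
    obtain ⟨s₀, hs₀, hne⟩ := hc
    have hlt : ∑ _s ∈ (univ : Finset F).erase (0:F), 1
        < ∑ s ∈ (univ : Finset F).erase (0:F), dd σ p s :=
      Finset.sum_lt_sum (fun i hi => by have := h0 i hi; omega)
        ⟨s₀, hs₀, by have := h0 s₀ hs₀; omega⟩
    rw [Finset.sum_const, smul_eq_mul, mul_one, card_erase_of_mem (mem_univ 0),
      card_univ, sum_dd σ hσ.injective p] at hlt
    exact lt_irrefl _ hlt
  have hprod := prod_pow_dd hσ p
  rw [Finset.prod_congr rfl (fun s hs => by rw [hall s hs, pow_one])] at hprod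
  rw [prod_univ_erase_zero] at hprod
  exact neg_one_ne_one hq hprod

lemma tight_struct (hq : Odd (Fintype.card F)) {σ : F → F}
    (hσ : Function.Bijective σ) (p m : F) (hm : m ≠ 0)
    (h1 : mu σ p = 1) (h0 : dd σ p m = 0) : dd σ p (-m) = 2 := by
  have hmE : m ∈ (univ : Finset F).erase 0 := mem_erase.2 ⟨hm, mem_univ _⟩
  have hfilt : ((univ : Finset F).erase 0).filter (fun s => dd σ p s = 0) = {m} := by
    obtain ⟨c, hc⟩ := Finset.card_eq_one.1 h1
    have hmem : m ∈ ((univ : Finset F).erase 0).filter (fun s => dd σ p s = 0) :=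
      mem_filter.2 ⟨hmE, h0⟩
    rw [hc] at hmem ⊢
    rw [mem_singleton] at hmem
    rw [hmem]
  set T := ((univ : Finset F).erase (0:F)).erase m with hT
  have hTs : ∀ s ∈ T, 1 ≤ dd σ p s := by
    intro s hs
    rw [hT, mem_erase] at hs
    by_contra hzero
    push_neg at hzero
    have hmem : s ∈ ((univ : Finset F).erase 0).filter (fun s => dd σ p s = 0) :=
      mem_filter.2 ⟨hs.2, by omega⟩
    rw [hfilt, mem_singleton] at hmem
    exact hs.1 hmem
  have hsumT : ∑ s ∈ T, dd σ p s = Fintype.card F - 1 := by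
    have hadd := Finset.add_sum_erase ((univ : Finset F).erase 0) (dd σ p) hmE
    rw [h0, zero_add] at hadd
    rw [← hT] at hadd
    rw [hadd, sum_dd σ hσ.injective p]
  have hcardT : T.card = Fintype.card F - 2 := by
    rw [hT, card_erase_of_mem hmE, card_erase_of_mem (mem_univ 0), card_univ]
    omega
  have hq3 : 3 ≤ Fintype.card F := by
    have hlt := Fintype.one_lt_card (α := F)
    have := Nat.odd_iff.1 hq
    omega
  have hex : ∃ s₂ ∈ T, 2 ≤ dd σ p s₂ := by
    by_contra hc
    push_neg at hc
    have hle : ∑ s ∈ T, dd σ p s ≤ ∑ _s ∈ T, 1 :=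
      Finset.sum_le_sum fun s hs => by have := hc s hs; omega
    rw [Finset.sum_const, smul_eq_mul, mul_one, hcardT, hsumT] at hle
    omega
  obtain ⟨s₂, hs₂T, hs₂2⟩ := hex
  have hsum2 : dd σ p s₂ + ∑ s ∈ T.erase s₂, dd σ p s = Fintype.card F - 1 := by
    rw [Finset.add_sum_erase T _ hs₂T, hsumT]
  have hRlow : T.card - 1 ≤ ∑ s ∈ T.erase s₂, dd σ p s := by
    calc T.card - 1 = ∑ _s ∈ T.erase s₂, 1 := by
          rw [Finset.sum_const, smul_eq_mul, mul_one, card_erase_of_mem hs₂T]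
      _ ≤ _ := Finset.sum_le_sum fun s hs => hTs s (mem_of_mem_erase hs)
  have hd2 : dd σ p s₂ = 2 := by omega
  have hrest : ∀ s ∈ T.erase s₂, dd σ p s = 1 := by
    intro s hs
    by_contra hne
    have h2' : 2 ≤ dd σ p s := by
      have := hTs s (mem_of_mem_erase hs); omega
    have hadd : dd σ p s + ∑ x ∈ (T.erase s₂).erase s, dd σ p x
        = ∑ x ∈ T.erase s₂, dd σ p x := Finset.add_sum_erase _ _ hs
    have hlow2 : (T.erase s₂).card - 1 ≤ ∑ x ∈ (T.erase s₂).erase s, dd σ p x := by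
      calc (T.erase s₂).card - 1 = ∑ _x ∈ (T.erase s₂).erase s, 1 := by
            rw [Finset.sum_const, smul_eq_mul, mul_one, card_erase_of_mem hs]
        _ ≤ _ := Finset.sum_le_sum fun x hx =>
            hTs x (mem_of_mem_erase (mem_of_mem_erase hx))
    have hce : (T.erase s₂).card = T.card - 1 := card_erase_of_mem hs₂T
    omega
  -- product computation
  have hP := prod_pow_dd hσ p
  have hsplit1 : ∏ s ∈ (univ : Finset F).erase 0, s ^ dd σ p s
      = m ^ dd σ p m * ∏ s ∈ T, s ^ dd σ p s :=
    (Finset.mul_prod_erase _ _ hmE).symm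
  have hsplit2 : ∏ s ∈ T, s ^ dd σ p s
      = s₂ ^ dd σ p s₂ * ∏ s ∈ T.erase s₂, s ^ dd σ p s :=
    (Finset.mul_prod_erase _ _ hs₂T).symm
  have hR : ∏ s ∈ T.erase s₂, s ^ dd σ p s = ∏ s ∈ T.erase s₂, s :=
    Finset.prod_congr rfl fun s hs => by rw [hrest s hs, pow_one]
  have e1 : s₂ ^ 2 * ∏ s ∈ T.erase s₂, s = 1 := by
    rw [← hd2, ← hR, ← hsplit2]
    rw [hsplit1, h0, pow_zero, one_mul] at hP
    exact hP
  have e2 : m * (s₂ * ∏ s ∈ T.erase s₂, s) = -1 := by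
    have hEms : ∏ s ∈ (univ : Finset F).erase 0, (s : F)
        = m * ∏ s ∈ T, (s : F) := (Finset.mul_prod_erase _ _ hmE).symm
    have hTms : ∏ s ∈ T, (s : F) = s₂ * ∏ s ∈ T.erase s₂, (s : F) :=
      (Finset.mul_prod_erase _ _ hs₂T).symm
    rw [← hTms, ← hEms, prod_univ_erase_zero]
  have hs₂m : s₂ = -m := by
    linear_combination s₂ * e2 - m * e1
  rw [← hs₂m]
  exact hd2

lemma Cs_pos {σ : F → F} {m b : F} (h3 : (fib σ m b).card = 3) : 1 ≤ Cs σ m := by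
  have hb : (1:ℕ) ≤ Nat.choose ((fib σ m b).card - 1) 2 := by
    rw [h3]; decide
  calc (1:ℕ) ≤ Nat.choose ((fib σ m b).card - 1) 2 := hb
    _ ≤ Cs σ m := Finset.single_le_sum
        (f := fun b => Nat.choose ((fib σ m b).card - 1) 2)
        (fun _ _ => Nat.zero_le _) (mem_univ b)

lemma exists_dd_zero (hq : Odd (Fintype.card F)) {σ : F → F} {m : F}
    (h0 : Cs σ m = 0) : ∃ p, dd σ p m = 0 := by
  by_contra hc
  push_neg at hc
  have heven : ∀ b : F, (fib σ m b).card % 2 = 0 := by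
    intro b
    have hch : Nat.choose ((fib σ m b).card - 1) 2 = 0 :=
      (Finset.sum_eq_zero_iff).1 h0 b (mem_univ b)
    have hle : (fib σ m b).card ≤ 2 := by
      have := Nat.choose_eq_zero_iff.1 hch
      omega
    have hne1 : (fib σ m b).card ≠ 1 := by
      intro h1
      obtain ⟨p, hp⟩ := Finset.card_eq_one.1 h1
      have hpm : p ∈ fib σ m b := by rw [hp]; exact mem_singleton_self p
      have hb : tau σ m p = b := mem_fib.1 hpm
      have hcp := fib_card_point σ m p
      rw [hb, h1] at hcp
      exact hc p (by omega)
    omega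
  have hmod : Fintype.card F % 2 = 0 := by
    rw [← sum_fib_card σ m, Finset.sum_nat_mod]
    have hz : ∑ b : F, (fib σ m b).card % 2 = 0 := Finset.sum_eq_zero fun b _ => heven b
    rw [hz]
  have := Nat.odd_iff.1 hq
  omega

lemma B_le_W (hq : Odd (Fintype.card F)) {σ : F → F} (hσ : Function.Bijective σ) :
    (((univ : Finset F).erase 0).filter
      (fun m => Cs σ m = 0 ∧ Cs σ (-m) = 0)).card ≤ Wsum σ := by
  have hw : ∀ m ∈ ((univ : Finset F).erase 0).filter
      (fun m => Cs σ m = 0 ∧ Cs σ (-m) = 0),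
      1 ≤ (univ.filter (fun p : F => dd σ p m = 0 ∧ 2 ≤ mu σ p)).card := by
    intro m hmB
    rw [mem_filter, mem_erase] at hmB
    obtain ⟨⟨hm0, _⟩, hC1, hC2⟩ := hmB
    obtain ⟨p, hp⟩ := exists_dd_zero hq hC1
    have hmu1 : 1 ≤ mu σ p := mu_pos hq hσ p
    have hmu2 : 2 ≤ mu σ p := by
      by_contra hlt
      push_neg at hlt
      have hone : mu σ p = 1 := by omega
      have h2 := tight_struct hq hσ p m hm0 hone hp
      have h3 : (fib σ (-m) (tau σ (-m) p)).card = 3 := by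
        rw [fib_card_point, h2]
      have := Cs_pos h3
      omega
    exact card_pos.2 ⟨p, mem_filter.2 ⟨mem_univ p, hp, hmu2⟩⟩
  calc (((univ : Finset F).erase 0).filter
        (fun m => Cs σ m = 0 ∧ Cs σ (-m) = 0)).card
      = ∑ m ∈ ((univ : Finset F).erase 0).filter
          (fun m => Cs σ m = 0 ∧ Cs σ (-m) = 0), 1 := by simp
    _ ≤ ∑ m ∈ ((univ : Finset F).erase 0).filter
          (fun m => Cs σ m = 0 ∧ Cs σ (-m) = 0),
          (univ.filter (fun p : F => dd σ p m = 0 ∧ 2 ≤ mu σ p)).card :=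
        Finset.sum_le_sum hw
    _ ≤ ∑ m ∈ (univ : Finset F).erase 0,
          (univ.filter (fun p : F => dd σ p m = 0 ∧ 2 ≤ mu σ p)).card :=
        Finset.sum_le_sum_of_subset (filter_subset _ _)
    _ = Wsum σ := rfl

lemma W_eq (σ : F → F) :
    Wsum σ = ∑ p ∈ univ.filter (fun p : F => 2 ≤ mu σ p), mu σ p := by
  rw [Finset.sum_filter]
  simp only [Wsum, Finset.card_filter]
  rw [Finset.sum_comm]
  refine Finset.sum_congr rfl fun p _ => ?_
  by_cases h2 : 2 ≤ mu σ p
  · rw [if_pos h2]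
    have hcongr : ∀ m ∈ (univ : Finset F).erase 0,
        (if dd σ p m = 0 ∧ 2 ≤ mu σ p then 1 else 0)
          = (if dd σ p m = 0 then 1 else 0) := by
      intro m _
      by_cases hd : dd σ p m = 0
      · rw [if_pos ⟨hd, h2⟩, if_pos hd]
      · rw [if_neg (fun hc => hd hc.1), if_neg hd]
    rw [Finset.sum_congr rfl hcongr]
    rw [mu, Finset.card_filter]
  · rw [if_neg h2]
    exact Finset.sum_eq_zero fun m _ => by
      rw [if_neg (fun hc => h2 hc.2)]

lemma q_le_2X_B (σ : F → F) :
    Fintype.card F - 1 ≤ 2 * XX σ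
      + (((univ : Finset F).erase 0).filter
          (fun m => Cs σ m = 0 ∧ Cs σ (-m) = 0)).card := by
  classical
  set B := ((univ : Finset F).erase 0).filter
    (fun m => Cs σ m = 0 ∧ Cs σ (-m) = 0) with hB
  set G := ((univ : Finset F).erase 0) \ B with hG
  set S1 := ((univ : Finset F).erase 0).filter (fun m => 1 ≤ Cs σ m) with hS1
  have hGS : G.card ≤ 2 * S1.card := by
    apply Finset.card_le_mul_card_image_of_maps_to
      (f := fun m => if 1 ≤ Cs σ m then m else -m)
    · intro m hm
      rw [hG, mem_sdiff] at hm
      obtain ⟨hE, hnB⟩ := hm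
      have hnot : ¬ (Cs σ m = 0 ∧ Cs σ (-m) = 0) := fun hcon =>
        hnB (by rw [hB]; exact mem_filter.2 ⟨hE, hcon⟩)
      by_cases h : 1 ≤ Cs σ m
      · rw [if_pos h, hS1]; exact mem_filter.2 ⟨hE, h⟩
      · rw [if_neg h, hS1]
        have hz : Cs σ m = 0 := by omega
        have h2 : 1 ≤ Cs σ (-m) := by
          rcases Nat.eq_zero_or_pos (Cs σ (-m)) with h' | h'
          · exact absurd ⟨hz, h'⟩ hnot
          · exact h'
        refine mem_filter.2 ⟨?_, h2⟩
        rw [mem_erase] at hE ⊢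
        exact ⟨neg_ne_zero.2 hE.1, mem_univ _⟩
    · intro c _
      have hsub : G.filter (fun m => (if 1 ≤ Cs σ m then m else -m) = c)
          ⊆ insert c {-c} := by
        intro m hm
        rw [mem_filter] at hm
        obtain ⟨_, hfm⟩ := hm
        by_cases h : 1 ≤ Cs σ m
        · rw [if_pos h] at hfm
          simp [hfm]
        · rw [if_neg h] at hfm
          have : m = -c := by rw [← hfm, neg_neg]
          simp [this]
      calc (G.filter (fun m => (if 1 ≤ Cs σ m then m else -m) = c)).card
          ≤ (insert c ({-c} : Finset F)).card := card_le_card hsub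
        _ ≤ 2 := by
            refine le_trans (card_insert_le _ _) ?_
            simp
  have hS1X : S1.card ≤ XX σ := by
    calc S1.card = ∑ _m ∈ S1, 1 := by simp
      _ ≤ ∑ m ∈ S1, Cs σ m := Finset.sum_le_sum fun m hm => (mem_filter.1 hm).2
      _ ≤ ∑ m ∈ (univ : Finset F).erase 0, Cs σ m :=
          Finset.sum_le_sum_of_subset (filter_subset _ _)
      _ = XX σ := rfl
  have hcard : G.card = ((univ : Finset F).erase 0).card - B.card := by
    rw [hG, card_sdiff_of_subset (filter_subset _ _)]
  have hBle : B.card ≤ ((univ : Finset F).erase 0).card :=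
    card_le_card (filter_subset _ _)
  have hEcard : ((univ : Finset F).erase 0).card = Fintype.card F - 1 := by
    rw [card_erase_of_mem (mem_univ 0), card_univ]
  omega

lemma main_nat (hq : Odd (Fintype.card F)) {σ : F → F}
    (hσ : Function.Bijective σ) : 3 * Fintype.card F ≤ 8 * XX σ + 1 := by
  classical
  have h3X : ∑ p : F, mu σ p ≤ 3 * XX σ := by
    rw [← sum_usl_eq_sum_mu]
    exact sum_usl_le σ hσ.injective
  have hsplit : ∑ p : F, mu σ p
      = (univ.filter (fun p : F => mu σ p = 1)).card + Wsum σ := by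
    rw [W_eq]
    rw [← Finset.sum_filter_add_sum_filter_not univ (fun p => mu σ p = 1) (mu σ)]
    congr 1
    · rw [Finset.sum_congr rfl (fun p hp => (mem_filter.1 hp).2)]
      simp
    · refine Finset.sum_congr ?_ (fun _ _ => rfl)
      refine Finset.filter_congr fun p _ => ?_
      have := mu_pos hq hσ p
      constructor
      · intro h; omega
      · intro h; omega
  have hpart : (univ.filter (fun p : F => mu σ p = 1)).card
      + (univ.filter (fun p : F => ¬ (mu σ p = 1))).card = Fintype.card F := by
    rw [Finset.card_filter_add_card_filter_not, card_univ]
  have hset : univ.filter (fun p : F => ¬ (mu σ p = 1))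
      = univ.filter (fun p : F => 2 ≤ mu σ p) := by
    refine Finset.filter_congr fun p _ => ?_
    have := mu_pos hq hσ p
    constructor
    · intro h; omega
    · intro h; omega
  have hge : 2 * (univ.filter (fun p : F => 2 ≤ mu σ p)).card
      ≤ ∑ p ∈ univ.filter (fun p : F => 2 ≤ mu σ p), mu σ p := by
    calc 2 * (univ.filter (fun p : F => 2 ≤ mu σ p)).card
        = ∑ _p ∈ univ.filter (fun p : F => 2 ≤ mu σ p), 2 := by
          rw [Finset.sum_const, smul_eq_mul, mul_comm]
      _ ≤ _ := Finset.sum_le_sum fun p hp => (mem_filter.1 hp).2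
  have hWeq := W_eq σ
  have h2XB := q_le_2X_B σ
  have hBW := B_le_W hq hσ
  have hcards := congrArg Finset.card hset
  omega

/-! ### Linking to the statement -/

lemma lineSize_fib (σ : F → F) (m b : F) : lineSize σ m b = (fib σ m b).card := rfl

lemma fib_zero {σ : F → F} (hσ : Function.Bijective σ) (b : F) :
    (fib σ 0 b).card = 1 := by
  rw [Finset.card_eq_one]
  obtain ⟨i, hi⟩ := hσ.surjective b
  refine ⟨i, ?_⟩
  ext x
  simp only [fib, mem_filter, mem_univ, true_and, zero_mul, zero_add, mem_singleton]
  constructor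
  · intro h; exact hσ.injective (by rw [h, hi])
  · intro h; rw [h, hi]

lemma Xfull_eq {σ : F → F} (hσ : Function.Bijective σ) :
    ∑ mb ∈ (univ : Finset (F × F)), Nat.choose ((fib σ mb.1 mb.2).card - 1) 2
      = XX σ := by
  rw [← Finset.univ_product_univ, Finset.sum_product]
  rw [← Finset.sum_erase_add _ _ (mem_univ (0:F))]
  have h0 : ∑ b : F, Nat.choose ((fib σ 0 b).card - 1) 2 = 0 :=
    Finset.sum_eq_zero fun b _ => by rw [fib_zero hσ]; decide
  rw [h0, add_zero]
  rfl

lemma X_le_triples {σ : F → F} (hσ : Function.Bijective σ) :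
    XX σ ≤ ((univ : Finset (Finset F)).filter
      (fun s : Finset F => s.card = 3 ∧ Collin σ s)).card := by
  classical
  rw [← Xfull_eq hσ]
  have hle : ∑ mb ∈ (univ : Finset (F × F)), Nat.choose ((fib σ mb.1 mb.2).card - 1) 2
      ≤ ∑ mb ∈ (univ : Finset (F × F)), Nat.choose ((fib σ mb.1 mb.2).card) 3 :=
    Finset.sum_le_sum fun mb _ => choose23 _
  refine le_trans hle ?_
  have hdisj : ∀ mb ∈ (univ : Finset (F × F)), ∀ mb' ∈ (univ : Finset (F × F)),
      mb ≠ mb' → Disjoint ((fib σ mb.1 mb.2).powersetCard 3)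
        ((fib σ mb'.1 mb'.2).powersetCard 3) := by
    intro mb _ mb' _ hne
    rw [Finset.disjoint_left]
    intro s hs hs'
    rw [Finset.mem_powersetCard] at hs hs'
    obtain ⟨hsub, hcard⟩ := hs
    obtain ⟨hsub', _⟩ := hs'
    obtain ⟨i, hi, j, hj, hij⟩ := Finset.one_lt_card.1 (by omega : 1 < s.card)
    have hi1 : σ i = mb.1 * i + mb.2 := by
      have := hsub hi; simpa [fib] using this
    have hi2 : σ i = mb'.1 * i + mb'.2 := by
      have := hsub' hi; simpa [fib] using this
    have hj1 : σ j = mb.1 * j + mb.2 := by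
      have := hsub hj; simpa [fib] using this
    have hj2 : σ j = mb'.1 * j + mb'.2 := by
      have := hsub' hj; simpa [fib] using this
    apply hne
    have hm : mb.1 = mb'.1 := by
      by_contra hm
      apply hij
      have hii : (mb.1 - mb'.1) * i = mb'.2 - mb.2 := by linear_combination hi2 - hi1
      have hjj : (mb.1 - mb'.1) * j = mb'.2 - mb.2 := by linear_combination hj2 - hj1
      exact mul_left_cancel₀ (sub_ne_zero.2 hm) (by rw [hii, hjj])
    have hb : mb.2 = mb'.2 := by
      have h := hi1.symm.trans hi2
      rw [hm] at h
      exact add_left_cancel h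
    exact Prod.ext hm hb
  have hcardb := Finset.card_biUnion hdisj
  have hsub : (univ : Finset (F × F)).biUnion
      (fun mb => (fib σ mb.1 mb.2).powersetCard 3)
      ⊆ (univ : Finset (Finset F)).filter
          (fun s => s.card = 3 ∧ Collin σ s) := by
    intro s hs
    rw [Finset.mem_biUnion] at hs
    obtain ⟨mb, _, hs⟩ := hs
    rw [Finset.mem_powersetCard] at hs
    refine mem_filter.2 ⟨mem_univ _, hs.2, ?_⟩
    intro i hi k hk l hl
    have hi' : σ i = mb.1 * i + mb.2 := by
      have := hs.1 hi; simpa [fib] using this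
    have hk' : σ k = mb.1 * k + mb.2 := by
      have := hs.1 hk; simpa [fib] using this
    have hl' : σ l = mb.1 * l + mb.2 := by
      have := hs.1 hl; simpa [fib] using this
    rw [hi', hk', hl']
    ring
  calc ∑ mb ∈ (univ : Finset (F × F)), Nat.choose ((fib σ mb.1 mb.2).card) 3
      = ∑ mb ∈ (univ : Finset (F × F)), ((fib σ mb.1 mb.2).powersetCard 3).card := by
        refine Finset.sum_congr rfl fun mb _ => ?_
        rw [Finset.card_powersetCard]
    _ = ((univ : Finset (F × F)).biUnion
          (fun mb => (fib σ mb.1 mb.2).powersetCard 3)).card := hcardb.symm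
    _ ≤ _ := card_le_card hsub

end CollinAux

open CollinAux in
/-- For a permutation `σ` of a finite field of odd order `q`,
`‖Γ_σ‖ = Σ_L (|L|-1)(|L|-2)/2` over the maximal collinear subsets `L` of the graph
(equivalently, over the lines meeting the graph in at least 3 points) is at least
`(5q-1)/14`; in particular the number of collinear triples of `Γ_σ` is at least
`(5q-1)/14`. -/
theorem norm_ge_five_q_sub_one_div_fourteen {F : Type*} [Field F] [Fintype F]
    [DecidableEq F] (hq : Odd (Fintype.card F))
    (σ : F → F) (hσ : Function.Bijective σ) :
    ((5 * Fintype.card F - 1 : ℚ)) / 14 ≤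
      ∑ p ∈ (Finset.univ : Finset (F × F)).filter (fun p => 3 ≤ lineSize σ p.1 p.2),
        ((lineSize σ p.1 p.2 : ℚ) - 1) * ((lineSize σ p.1 p.2 : ℚ) - 2) / 2 ∧
    ((5 * Fintype.card F - 1 : ℚ)) / 14 ≤
      ((Finset.univ : Finset (Finset F)).filter
        (fun s => s.card = 3 ∧ Collin σ s)).card := by
  classical
  have hq3 : 3 ≤ Fintype.card F := by
    have h1 : 1 < Fintype.card F := Fintype.one_lt_card
    have h2 := Nat.odd_iff.1 hq
    omega
  have hmain := CollinAux.main_nat hq hσ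
  constructor
  · have hsum : (∑ p ∈ (Finset.univ : Finset (F × F)).filter
        (fun p => 3 ≤ lineSize σ p.1 p.2),
        ((lineSize σ p.1 p.2 : ℚ) - 1) * ((lineSize σ p.1 p.2 : ℚ) - 2) / 2)
        = ((XX σ : ℕ) : ℚ) := by
      rw [← Xfull_eq hσ, Nat.cast_sum]
      calc (∑ p ∈ (Finset.univ : Finset (F × F)).filter
            (fun p => 3 ≤ lineSize σ p.1 p.2),
            ((lineSize σ p.1 p.2 : ℚ) - 1) * ((lineSize σ p.1 p.2 : ℚ) - 2) / 2)
          = ∑ mb ∈ (Finset.univ : Finset (F × F)).filter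
              (fun p => 3 ≤ lineSize σ p.1 p.2),
              ((Nat.choose ((fib σ mb.1 mb.2).card - 1) 2 : ℕ) : ℚ) := by
            refine Finset.sum_congr rfl fun mb hmb => ?_
            have hk : 3 ≤ (fib σ mb.1 mb.2).card := (mem_filter.1 hmb).2
            rw [Nat.cast_choose_two,
              Nat.cast_sub (by omega : 1 ≤ (fib σ mb.1 mb.2).card)]
            have hls : (lineSize σ mb.1 mb.2 : ℚ) = ((fib σ mb.1 mb.2).card : ℚ) := rfl
            rw [hls]
            ring
        _ = ∑ mb ∈ (univ : Finset (F × F)),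
              ((Nat.choose ((fib σ mb.1 mb.2).card - 1) 2 : ℕ) : ℚ) := by
            refine Finset.sum_subset (filter_subset _ _) ?_
            intro mb _ hmb
            have hk : ¬ 3 ≤ lineSize σ mb.1 mb.2 := fun h =>
              hmb (mem_filter.2 ⟨mem_univ _, h⟩)
            have hz : Nat.choose ((fib σ mb.1 mb.2).card - 1) 2 = 0 := by
              apply Nat.choose_eq_zero_of_lt
              have : lineSize σ mb.1 mb.2 = (fib σ mb.1 mb.2).card := rfl
              omega
            rw [hz]
            norm_num
    rw [hsum]
    rw [div_le_iff₀ (by norm_num : (0:ℚ) < 14)]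
    have hnat : 5 * Fintype.card F ≤ 14 * XX σ + 1 := by omega
    have hcast := (Nat.cast_le (α := ℚ)).2 hnat
    push_cast at hcast ⊢
    linarith
  · have hle := X_le_triples (σ := σ) hσ
    have hnat : 5 * Fintype.card F
        ≤ 14 * ((Finset.univ : Finset (Finset F)).filter
            (fun s => s.card = 3 ∧ Collin σ s)).card + 1 := by omega
    rw [div_le_iff₀ (by norm_num : (0:ℚ) < 14)]
    have hcast := (Nat.cast_le (α := ℚ)).2 hnat
    push_cast at hcast ⊢
    linarith
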